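/- arXiv:2210.00935 — 7 statements merged into one kernel-verified Lean document; each statement's English description precedes it below -/
import Mathlib

section
/- Under each of the three generating fundamental symmetries ε², ε¹, ε⁶ the half-angle coordinates transform by a single sign flip: for every p = (x,y,θ) ∈ ℝ³ one has (b¹,b²,b³)(ε²(p)) = (−b¹(p), b²(p), b³(p)), (b¹,b²,b³)(ε¹(p)) = (b¹(p), −b²(p), b³(p)), and (b¹,b²,b³)(ε⁶(p)) = (b¹(p), b²(p), −b³(p)). Consequently, for θ ∈ (−π,π) the logarithmic coordinates (c¹,c²,c³) flip signs in exactly the same manner under ε², ε¹, ε⁶. -/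
open Real Set

noncomputable section

/-- Points of `ℝ³` in coordinates `(x, y, θ)`. -/
abbrev Pt : Type := ℝ × ℝ × ℝ

def ptX (p : Pt) : ℝ := p.1
def ptY (p : Pt) : ℝ := p.2.1
def ptTheta (p : Pt) : ℝ := p.2.2

/-- Half-angle coordinate `b¹`. -/
def b1 (p : Pt) : ℝ := ptX p * Real.cos (ptTheta p / 2) + ptY p * Real.sin (ptTheta p / 2)
/-- Half-angle coordinate `b²`. -/
def b2 (p : Pt) : ℝ := -ptX p * Real.sin (ptTheta p / 2) + ptY p * Real.cos (ptTheta p / 2)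
/-- Half-angle coordinate `b³`. -/
def b3 (p : Pt) : ℝ := ptTheta p

/-- `sinc u = sin u / u`, with `sinc 0 = 1`. -/
def sinc (u : ℝ) : ℝ := if u = 0 then 1 else Real.sin u / u

/-- Logarithmic coordinate `c¹`. -/
def c1 (p : Pt) : ℝ := b1 p / _root_.sinc (ptTheta p / 2)
/-- Logarithmic coordinate `c²`. -/
def c2 (p : Pt) : ℝ := b2 p / _root_.sinc (ptTheta p / 2)
/-- Logarithmic coordinate `c³`. -/
def c3 (p : Pt) : ℝ := ptTheta p

/-- Fundamental symmetry `ε²`. -/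
def eps2 (p : Pt) : Pt :=
  (-ptX p * Real.cos (ptTheta p) - ptY p * Real.sin (ptTheta p),
    -ptX p * Real.sin (ptTheta p) + ptY p * Real.cos (ptTheta p), ptTheta p)

/-- Fundamental symmetry `ε¹`. -/
def eps1 (p : Pt) : Pt :=
  (ptX p * Real.cos (ptTheta p) + ptY p * Real.sin (ptTheta p),
    ptX p * Real.sin (ptTheta p) - ptY p * Real.cos (ptTheta p), ptTheta p)

/-- Fundamental symmetry `ε⁶`. -/
def eps6 (p : Pt) : Pt :=
  (ptX p * Real.cos (ptTheta p) + ptY p * Real.sin (ptTheta p),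
    -ptX p * Real.sin (ptTheta p) + ptY p * Real.cos (ptTheta p), -ptTheta p)

/-- `γ` is piecewise `C¹` on `[a,b]`: continuous on `[a,b]` and differentiable away from
finitely many points. -/
def PiecewiseC1On (γ : ℝ → Pt) (a b : ℝ) : Prop :=
  ContinuousOn γ (Set.Icc a b) ∧
    ∃ S : Finset ℝ, ∀ s ∈ Set.Icc a b, s ∉ S → DifferentiableAt ℝ γ s

/-- The Riemannian speed `‖γ̇(s)‖` of a curve w.r.t. the left-invariant metric with
parameters `w₁, w₂, w₃`. -/
def speed (w₁ w₂ w₃ : ℝ) (γ : ℝ → Pt) (s : ℝ) : ℝ :=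
  Real.sqrt
    (w₁ ^ 2 * (Real.cos (ptTheta (γ s)) * deriv (fun t => ptX (γ t)) s
        + Real.sin (ptTheta (γ s)) * deriv (fun t => ptY (γ t)) s) ^ 2
      + w₂ ^ 2 * (-Real.sin (ptTheta (γ s)) * deriv (fun t => ptX (γ t)) s
        + Real.cos (ptTheta (γ s)) * deriv (fun t => ptY (γ t)) s) ^ 2
      + w₃ ^ 2 * (deriv (fun t => ptTheta (γ t)) s) ^ 2)

/-- Riemannian length of the curve `γ : [a,b] → ℝ³`. -/
def rLength (w₁ w₂ w₃ : ℝ) (γ : ℝ → Pt) (a b : ℝ) : ℝ := ∫ s in a..b, speed w₁ w₂ w₃ γ s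

/-- `γ t` reaches `q` up to a multiple of `2π` in the angular variable. -/
def EndsAt (γ : ℝ → Pt) (t : ℝ) (q : Pt) : Prop :=
  ∃ k : ℤ, γ t = (ptX q, ptY q, ptTheta q + 2 * Real.pi * (k : ℝ))

/-- Exact Riemannian distance from the origin. -/
def rDist (w₁ w₂ w₃ : ℝ) (p : Pt) : ℝ :=
  sInf { l : ℝ | ∃ γ : ℝ → Pt, PiecewiseC1On γ 0 1 ∧ γ 0 = ((0 : ℝ), (0 : ℝ), (0 : ℝ)) ∧
    EndsAt γ 1 p ∧ l = rLength w₁ w₂ w₃ γ 0 1 }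

/-- A curve is horizontal: no sideways (`A₂`) motion. -/
def Horizontal (γ : ℝ → Pt) (a b : ℝ) : Prop :=
  ∀ s ∈ Set.Icc a b,
    -Real.sin (ptTheta (γ s)) * deriv (fun t => ptX (γ t)) s
      + Real.cos (ptTheta (γ s)) * deriv (fun t => ptY (γ t)) s = 0

/-- Sub-Riemannian distance from the origin, valued in `[0,∞]`. -/
def srDist (w₁ w₂ w₃ : ℝ) (p : Pt) : ENNReal :=
  sInf { l : ENNReal | ∃ γ : ℝ → Pt, PiecewiseC1On γ 0 1 ∧ Horizontal γ 0 1 ∧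
    γ 0 = ((0 : ℝ), (0 : ℝ), (0 : ℝ)) ∧ EndsAt γ 1 p ∧
    l = ENNReal.ofReal (rLength w₁ w₂ w₃ γ 0 1) }

/-- Half-angle distance approximation `ρ_b`. -/
def rhoB (w₁ w₂ w₃ : ℝ) (p : Pt) : ℝ :=
  Real.sqrt ((w₁ * b1 p) ^ 2 + (w₂ * b2 p) ^ 2 + (w₃ * b3 p) ^ 2)

/-- Logarithmic distance approximation `ρ_c`. -/
def rhoC (w₁ w₂ w₃ : ℝ) (p : Pt) : ℝ :=
  Real.sqrt ((w₁ * c1 p) ^ 2 + (w₂ * c2 p) ^ 2 + (w₃ * c3 p) ^ 2)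

/-- Lower bound `l`. -/
def lBnd (w₁ w₃ : ℝ) (p : Pt) : ℝ :=
  Real.sqrt ((w₁ * ptX p) ^ 2 + (w₁ * ptY p) ^ 2 + (w₃ * ptTheta p) ^ 2)

/-- Upper bound `u₁`. -/
def u1Bnd (w₂ w₃ : ℝ) (p : Pt) : ℝ :=
  Real.sqrt ((w₂ * ptX p) ^ 2 + (w₂ * ptY p) ^ 2 + (w₃ * ptTheta p) ^ 2)

/-- Upper bound `u₂`. -/
def u2Bnd (w₁ w₃ : ℝ) (p : Pt) : ℝ :=
  w₁ * Real.sqrt (ptX p ^ 2 + ptY p ^ 2) + w₃ * Real.pi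

/-- Exact morphological kernel `k = (t/β)(d/t)^β`. -/
def kerExact (w₁ w₂ w₃ t β : ℝ) (p : Pt) : ℝ := (t / β) * (rDist w₁ w₂ w₃ p / t) ^ β

/-- Approximative morphological kernel `k_b = (t/β)(ρ_b/t)^β`. -/
def kerB (w₁ w₂ w₃ t β : ℝ) (p : Pt) : ℝ := (t / β) * (rhoB w₁ w₂ w₃ p / t) ^ β

/-- Left-invariant derivative `A₁ f = cos θ ∂ₓ f + sin θ ∂_y f`. -/
def A1d (f : Pt → ℝ) (p : Pt) : ℝ :=
  Real.cos (ptTheta p) * deriv (fun x => f (x, ptY p, ptTheta p)) (ptX p)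
    + Real.sin (ptTheta p) * deriv (fun y => f (ptX p, y, ptTheta p)) (ptY p)

/-- Left-invariant derivative `A₂ f = -sin θ ∂ₓ f + cos θ ∂_y f`. -/
def A2d (f : Pt → ℝ) (p : Pt) : ℝ :=
  -Real.sin (ptTheta p) * deriv (fun x => f (x, ptY p, ptTheta p)) (ptX p)
    + Real.cos (ptTheta p) * deriv (fun y => f (ptX p, y, ptTheta p)) (ptY p)

/-- Left-invariant derivative `A₃ f = ∂_θ f`. -/
def A3d (f : Pt → ℝ) (p : Pt) : ℝ := deriv (fun θ => f (ptX p, ptY p, θ)) (ptTheta p)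

/-- Squared dual norm of the differential of `ρ_b`:
`‖dρ_b‖_*² = w₁⁻²(A₁ρ_b)² + w₂⁻²(A₂ρ_b)² + w₃⁻²(A₃ρ_b)²`. -/
def dualNormSq (w₁ w₂ w₃ : ℝ) (p : Pt) : ℝ :=
  w₁⁻¹ ^ 2 * (A1d (rhoB w₁ w₂ w₃) p) ^ 2 + w₂⁻¹ ^ 2 * (A2d (rhoB w₁ w₂ w₃) p) ^ 2
    + w₃⁻¹ ^ 2 * (A3d (rhoB w₁ w₂ w₃) p) ^ 2

/-- Exact Riemannian distance between two points, as an infimum over curves `[0,t] → ℝ³`. -/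
def rDist2 (w₁ w₂ w₃ t : ℝ) (p q : Pt) : ℝ :=
  sInf { l : ℝ | ∃ γ : ℝ → Pt, PiecewiseC1On γ 0 t ∧ γ 0 = p ∧ EndsAt γ t q ∧
    l = rLength w₁ w₂ w₃ γ 0 t }

lemma my_sinc_neg (u : ℝ) : _root_.sinc (-u) = _root_.sinc u := by
  unfold _root_.sinc
  rcases eq_or_ne u 0 with h | h
  · simp [h]
  · rw [if_neg (neg_ne_zero.mpr h), if_neg h, Real.sin_neg, neg_div_neg_eq]

lemma my_bflip (p : Pt) :
    b1 (eps2 p) = -b1 p ∧ b2 (eps2 p) = b2 p ∧ b3 (eps2 p) = b3 p ∧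
    b1 (eps1 p) = b1 p ∧ b2 (eps1 p) = -b2 p ∧ b3 (eps1 p) = b3 p ∧
    b1 (eps6 p) = b1 p ∧ b2 (eps6 p) = b2 p ∧ b3 (eps6 p) = -b3 p := by
  obtain ⟨x, y, θ⟩ := p
  have hc : Real.cos θ = Real.cos (θ/2)^2 - Real.sin (θ/2)^2 := by
    rw [show θ = θ/2 + θ/2 by ring, Real.cos_add]; ring
  have hs : Real.sin θ = 2 * Real.sin (θ/2) * Real.cos (θ/2) := by
    rw [show θ = θ/2 + θ/2 by ring, Real.sin_add]; ring
  have hpy : Real.sin (θ/2)^2 + Real.cos (θ/2)^2 = 1 := Real.sin_sq_add_cos_sq _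
  refine ⟨?_, ?_, rfl, ?_, ?_, rfl, ?_, ?_, rfl⟩ <;>
    simp only [b1, b2, b3, eps1, eps2, eps6, ptX, ptY, ptTheta, neg_div, Real.cos_neg,
      Real.sin_neg, hc, hs]
  · linear_combination (-(x * Real.cos (θ/2) + y * Real.sin (θ/2))) * hpy
  · linear_combination (-x * Real.sin (θ/2) + y * Real.cos (θ/2)) * hpy
  · linear_combination (x * Real.cos (θ/2) + y * Real.sin (θ/2)) * hpy
  · linear_combination (x * Real.sin (θ/2) - y * Real.cos (θ/2)) * hpy
  · linear_combination (x * Real.cos (θ/2) + y * Real.sin (θ/2)) * hpy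
  · linear_combination (-x * Real.sin (θ/2) + y * Real.cos (θ/2)) * hpy

theorem half_angle_and_log_coordinates_flip_under_symmetries :
    (∀ p : Pt,
        b1 (eps2 p) = -b1 p ∧ b2 (eps2 p) = b2 p ∧ b3 (eps2 p) = b3 p ∧
        b1 (eps1 p) = b1 p ∧ b2 (eps1 p) = -b2 p ∧ b3 (eps1 p) = b3 p ∧
        b1 (eps6 p) = b1 p ∧ b2 (eps6 p) = b2 p ∧ b3 (eps6 p) = -b3 p) ∧
    (∀ p : Pt, ptTheta p ∈ Set.Ioo (-Real.pi) Real.pi →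
        c1 (eps2 p) = -c1 p ∧ c2 (eps2 p) = c2 p ∧ c3 (eps2 p) = c3 p ∧
        c1 (eps1 p) = c1 p ∧ c2 (eps1 p) = -c2 p ∧ c3 (eps1 p) = c3 p ∧
        c1 (eps6 p) = c1 p ∧ c2 (eps6 p) = c2 p ∧ c3 (eps6 p) = -c3 p) := by
  refine ⟨my_bflip, fun p _ => ?_⟩
  obtain ⟨hb1, hb2, hb3, hb4, hb5, hb6, hb7, hb8, hb9⟩ := my_bflip p
  have ht2 : ptTheta (eps2 p) = ptTheta p := rfl
  have ht1 : ptTheta (eps1 p) = ptTheta p := rfl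
  have ht6 : ptTheta (eps6 p) = -ptTheta p := rfl
  have hsinc6 : _root_.sinc (ptTheta (eps6 p) / 2) = _root_.sinc (ptTheta p / 2) := by
    rw [ht6, neg_div, my_sinc_neg]
  refine ⟨?_, ?_, rfl, ?_, ?_, rfl, ?_, ?_, ?_⟩ <;>
    simp only [c1, c2, c3, ht1, ht2, ht6, hb1, hb2, hb4, hb5, hb7, hb8, neg_div, my_sinc_neg]

end
end

section
/- Fixed-point characterisation of the fundamental symmetries: for every p = (x,y,θ) ∈ ℝ³ one has ε²(p) = p if and only if b¹(p) = 0, and ε¹(p) = p if and only if b²(p) = 0; moreover, if θ ∈ (−π,π), then ε⁶(p) = p if and only if b³(p) = 0, i.e. θ = 0. -/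
open Real Set

noncomputable section

theorem fixed_points_of_fundamental_symmetries (p : Pt) :
    (eps2 p = p ↔ b1 p = 0) ∧ (eps1 p = p ↔ b2 p = 0) ∧
    (ptTheta p ∈ Set.Ioo (-Real.pi) Real.pi → (eps6 p = p ↔ b3 p = 0)) := by
  obtain ⟨x, y, θ⟩ := p
  have hpyth : Real.sin (θ/2) ^ 2 + Real.cos (θ/2) ^ 2 = 1 := Real.sin_sq_add_cos_sq _
  have hc : Real.cos θ = Real.cos (θ/2) ^ 2 - Real.sin (θ/2) ^ 2 := by
    have := Real.cos_add (θ/2) (θ/2)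
    rw [show θ/2 + θ/2 = θ by ring] at this
    rw [this]; ring
  have hs : Real.sin θ = 2 * Real.sin (θ/2) * Real.cos (θ/2) := by
    have := Real.sin_add (θ/2) (θ/2)
    rw [show θ/2 + θ/2 = θ by ring] at this
    rw [this]; ring
  simp only [eps2, eps1, eps6, b1, b2, b3, ptX, ptY, ptTheta, Prod.mk.injEq, Set.mem_Ioo]
  rw [hc, hs]
  refine ⟨⟨fun h => ?_, fun h => ?_⟩, ⟨fun h => ?_, fun h => ?_⟩,
    fun hθ6 => ⟨fun h => ?_, fun h => ?_⟩⟩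
  · obtain ⟨h1, h2, -⟩ := h
    have hcb : Real.cos (θ/2) * (x * Real.cos (θ/2) + y * Real.sin (θ/2)) = 0 := by
      linear_combination (-1/2) * h1 + (x/2) * hpyth
    have hsb : Real.sin (θ/2) * (x * Real.cos (θ/2) + y * Real.sin (θ/2)) = 0 := by
      linear_combination (-1/2) * h2 + (y/2) * hpyth
    linear_combination Real.cos (θ/2) * hcb + Real.sin (θ/2) * hsb
      - (x * Real.cos (θ/2) + y * Real.sin (θ/2)) * hpyth
  · refine ⟨?_, ?_, trivial⟩
    · linear_combination (-2 * Real.cos (θ/2)) * h + x * hpyth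
    · linear_combination (-2 * Real.sin (θ/2)) * h + y * hpyth
  · obtain ⟨h1, h2, -⟩ := h
    have hsd : Real.sin (θ/2) * (-x * Real.sin (θ/2) + y * Real.cos (θ/2)) = 0 := by
      linear_combination (1/2) * h1 - (x/2) * hpyth
    have hcd : Real.cos (θ/2) * (-x * Real.sin (θ/2) + y * Real.cos (θ/2)) = 0 := by
      linear_combination (-1/2) * h2 + (y/2) * hpyth
    linear_combination Real.sin (θ/2) * hsd + Real.cos (θ/2) * hcd
      - (-x * Real.sin (θ/2) + y * Real.cos (θ/2)) * hpyth
  · refine ⟨?_, ?_, trivial⟩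
    · linear_combination (2 * Real.sin (θ/2)) * h + x * hpyth
    · linear_combination (-2 * Real.cos (θ/2)) * h + y * hpyth
  · obtain ⟨-, -, h3⟩ := h
    linarith
  · subst h
    norm_num

end
end

section
/- A point p = (x,y,θ) ∈ ℝ³ with θ ∈ (−π,π) satisfies b²(p) = 0 if and only if p lies in the image of the SE(2) exponential map restricted to span{A₁,A₃}, i.e. if and only if there exists c¹ ∈ ℝ such that x = c¹ cos(θ/2) sinc(θ/2) and y = c¹ sin(θ/2) sinc(θ/2). -/
open Real Set

noncomputable section

lemma sinc_pos_of_abs_lt_pi {u : ℝ} (hu : |u| < Real.pi) : 0 < _root_.sinc u := by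
  unfold _root_.sinc
  rcases eq_or_ne u 0 with h0 | h0
  · simp [h0]
  · rw [if_neg h0]
    rcases lt_or_gt_of_ne h0 with hlt | hgt
    · have hs : Real.sin u < 0 := by
        have : Real.sin (-u) > 0 :=
          Real.sin_pos_of_pos_of_lt_pi (by linarith) (by
            rw [abs_of_neg hlt] at hu; linarith)
        rw [Real.sin_neg] at this; linarith
      exact div_pos_of_neg_of_neg hs hlt
    · have hs : 0 < Real.sin u :=
        Real.sin_pos_of_pos_of_lt_pi hgt (by rw [abs_of_pos hgt] at hu; linarith)
      exact div_pos hs hgt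

theorem cocircular_iff_exp_span_A1_A3 (p : Pt)
    (h : ptTheta p ∈ Set.Ioo (-Real.pi) Real.pi) :
    b2 p = 0 ↔ ∃ cc : ℝ,
      ptX p = cc * Real.cos (ptTheta p / 2) * _root_.sinc (ptTheta p / 2) ∧
      ptY p = cc * Real.sin (ptTheta p / 2) * _root_.sinc (ptTheta p / 2) := by
  obtain ⟨h1, h2⟩ := h
  obtain ⟨x, y, θ⟩ := p
  simp only [ptTheta, ptX, ptY, b2] at *
  have habs : |θ / 2| < Real.pi := by
    rw [abs_lt]; constructor <;> nlinarith [Real.pi_pos]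
  have hsinc : 0 < _root_.sinc (θ / 2) := sinc_pos_of_abs_lt_pi habs
  have hpyth : Real.cos (θ / 2) ^ 2 + Real.sin (θ / 2) ^ 2 = 1 := by
    rw [add_comm]; exact Real.sin_sq_add_cos_sq _
  constructor
  · intro hb2
    refine ⟨(x * Real.cos (θ / 2) + y * Real.sin (θ / 2)) / _root_.sinc (θ / 2), ?_, ?_⟩
    · field_simp
      linear_combination (-x) * hpyth + (-(Real.sin (θ / 2))) * hb2
    · field_simp
      linear_combination (-y) * hpyth + Real.cos (θ / 2) * hb2
  · rintro ⟨cc, hx, hy⟩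
    rw [hx, hy]
    ring

end
end

section
/- Second global upper bound on the exact distance: for every p = (x,y,θ) ∈ ℝ² × [−π,π] one has d(p) ≤ u₂(p) := w₁√(x² + y²) + w₃π. -/
open Real Set

noncomputable section

/-! ### Auxiliary material for the proof -/

lemma ae_ne_point (c : ℝ) : ∀ᵐ x : ℝ, x ≠ c := by
  have h : MeasureTheory.volume ({c} : Set ℝ) = 0 := Real.volume_singleton
  have h2 := MeasureTheory.compl_mem_ae_iff.mpr h
  filter_upwards [h2] with x hx
  simpa using hx

lemma integral_const_on_Ioo {f : ℝ → ℝ} {a b c : ℝ} (hab : a ≤ b)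
    (h : ∀ s ∈ Set.Ioo a b, f s = c) :
    IntervalIntegrable f MeasureTheory.volume a b ∧
      (∫ s in a..b, f s) = (b - a) * c := by
  constructor
  · rw [intervalIntegrable_iff_integrableOn_Ioo_of_le hab]
    have hc : MeasureTheory.IntegrableOn (fun _ : ℝ => c) (Set.Ioo a b) :=
      MeasureTheory.integrableOn_const measure_Ioo_lt_top.ne
    exact hc.congr_fun (fun s hs => (h s hs).symm) measurableSet_Ioo
  · have h2 : ∀ᵐ x ∂(MeasureTheory.volume), x ∈ Set.uIoc a b → f x = c := by
      filter_upwards [ae_ne_point b] with x hx hmem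
      rw [Set.uIoc_of_le hab] at hmem
      exact h x ⟨hmem.1, lt_of_le_of_ne hmem.2 hx⟩
    rw [intervalIntegral.integral_congr_ae h2, intervalIntegral.integral_const, smul_eq_mul]

/-- The explicit curve: rotate, translate, rotate. -/
def bCurve (x y φ θ : ℝ) : ℝ → Pt := fun s =>
  (max 0 (min 1 (3 * s - 1)) * x, max 0 (min 1 (3 * s - 1)) * y,
    φ * min 1 (3 * s) + (θ - φ) * max 0 (3 * s - 2))

lemma bCurve_ev1 (x y φ θ : ℝ) {s : ℝ} (hs : s < 1 / 3) :
    bCurve x y φ θ =ᶠ[nhds s] fun t => ((0 : ℝ), (0 : ℝ), φ * (3 * t)) := by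
  filter_upwards [Iio_mem_nhds hs] with t ht
  simp only [Set.mem_Iio] at ht
  have h1 : min 1 (3 * t) = 3 * t := min_eq_right (by linarith)
  have h2 : min 1 (3 * t - 1) = 3 * t - 1 := min_eq_right (by linarith)
  have h3 : max 0 (3 * t - 1) = 0 := max_eq_left (by linarith)
  have h4 : max 0 (3 * t - 2) = 0 := max_eq_left (by linarith)
  simp [bCurve, h1, h2, h3, h4]

lemma bCurve_ev2 (x y φ θ : ℝ) {s : ℝ} (hs1 : 1 / 3 < s) (hs2 : s < 2 / 3) :
    bCurve x y φ θ =ᶠ[nhds s] fun t => ((3 * t - 1) * x, (3 * t - 1) * y, φ) := by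
  filter_upwards [Ioo_mem_nhds hs1 hs2] with t ht
  obtain ⟨ht1, ht2⟩ := ht
  have h1 : min 1 (3 * t) = 1 := min_eq_left (by linarith)
  have h2 : min 1 (3 * t - 1) = 3 * t - 1 := min_eq_right (by linarith)
  have h3 : max 0 (3 * t - 1) = 3 * t - 1 := max_eq_right (by linarith)
  have h4 : max 0 (3 * t - 2) = 0 := max_eq_left (by linarith)
  simp [bCurve, h1, h2, h3, h4]

lemma bCurve_ev3 (x y φ θ : ℝ) {s : ℝ} (hs : 2 / 3 < s) :
    bCurve x y φ θ =ᶠ[nhds s] fun t => (x, y, φ + (θ - φ) * (3 * t - 2)) := by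
  filter_upwards [Ioi_mem_nhds hs] with t ht
  simp only [Set.mem_Ioi] at ht
  have h1 : min 1 (3 * t) = 1 := min_eq_left (by linarith)
  have h2 : min 1 (3 * t - 1) = 1 := min_eq_left (by linarith)
  have h3 : max 0 (1 : ℝ) = 1 := max_eq_right (by norm_num)
  have h4 : max 0 (3 * t - 2) = 3 * t - 2 := max_eq_right (by linarith)
  simp [bCurve, h1, h2, h3, h4]

lemma bCurve_speed1 (w₁ w₂ w₃ x y φ θ : ℝ) (hw₃ : 0 ≤ w₃) {s : ℝ} (hs : s < 1 / 3) :
    speed w₁ w₂ w₃ (bCurve x y φ θ) s = 3 * (w₃ * |φ|) := by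
  have hE := bCurve_ev1 x y φ θ hs
  have hX : (fun t => ptX (bCurve x y φ θ t)) =ᶠ[nhds s] fun _ => (0 : ℝ) :=
    hE.mono fun t ht => by simp only [ht, ptX, ptY, ptTheta]
  have hY : (fun t => ptY (bCurve x y φ θ t)) =ᶠ[nhds s] fun _ => (0 : ℝ) :=
    hE.mono fun t ht => by simp only [ht, ptX, ptY, ptTheta]
  have hΘ : (fun t => ptTheta (bCurve x y φ θ t)) =ᶠ[nhds s] fun t => φ * (3 * t) :=
    hE.mono fun t ht => by simp only [ht, ptX, ptY, ptTheta]
  have dX : deriv (fun t => ptX (bCurve x y φ θ t)) s = 0 := by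
    rw [hX.deriv_eq]; exact deriv_const s 0
  have dY : deriv (fun t => ptY (bCurve x y φ θ t)) s = 0 := by
    rw [hY.deriv_eq]; exact deriv_const s 0
  have dΘ : deriv (fun t => ptTheta (bCurve x y φ θ t)) s = φ * 3 := by
    rw [hΘ.deriv_eq]
    have h : HasDerivAt (fun t : ℝ => φ * (3 * t)) (φ * 3) s := by
      simpa using ((hasDerivAt_id s).const_mul (3 : ℝ)).const_mul φ
    exact h.deriv
  unfold speed
  rw [dX, dY, dΘ]
  have hval : w₁ ^ 2 * (Real.cos (ptTheta (bCurve x y φ θ s)) * 0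
        + Real.sin (ptTheta (bCurve x y φ θ s)) * 0) ^ 2
      + w₂ ^ 2 * (-Real.sin (ptTheta (bCurve x y φ θ s)) * 0
        + Real.cos (ptTheta (bCurve x y φ θ s)) * 0) ^ 2
      + w₃ ^ 2 * (φ * 3) ^ 2 = (3 * (w₃ * |φ|)) ^ 2 := by
    have := sq_abs φ
    nlinarith [sq_abs φ]
  rw [hval, Real.sqrt_sq (by positivity)]

lemma bCurve_speed2 (w₁ w₂ w₃ x y φ θ : ℝ) (hw₁ : 0 ≤ w₁)
    (hcol : Real.sin φ * x = Real.cos φ * y) {s : ℝ} (hs1 : 1 / 3 < s) (hs2 : s < 2 / 3) :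
    speed w₁ w₂ w₃ (bCurve x y φ θ) s = 3 * (w₁ * Real.sqrt (x ^ 2 + y ^ 2)) := by
  have hE := bCurve_ev2 x y φ θ hs1 hs2
  have hX : (fun t => ptX (bCurve x y φ θ t)) =ᶠ[nhds s] fun t => (3 * t - 1) * x :=
    hE.mono fun t ht => by simp only [ht, ptX, ptY, ptTheta]
  have hY : (fun t => ptY (bCurve x y φ θ t)) =ᶠ[nhds s] fun t => (3 * t - 1) * y :=
    hE.mono fun t ht => by simp only [ht, ptX, ptY, ptTheta]
  have hΘ : (fun t => ptTheta (bCurve x y φ θ t)) =ᶠ[nhds s] fun _ => φ :=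
    hE.mono fun t ht => by simp only [ht, ptX, ptY, ptTheta]
  have hA : ptTheta (bCurve x y φ θ s) = φ := by
    rw [hE.eq_of_nhds]; rfl
  have dX : deriv (fun t => ptX (bCurve x y φ θ t)) s = 3 * x := by
    rw [hX.deriv_eq]
    have h : HasDerivAt (fun t : ℝ => (3 * t - 1) * x) (3 * x) s := by
      simpa using (((hasDerivAt_id s).const_mul (3 : ℝ)).sub_const 1).mul_const x
    exact h.deriv
  have dY : deriv (fun t => ptY (bCurve x y φ θ t)) s = 3 * y := by
    rw [hY.deriv_eq]
    have h : HasDerivAt (fun t : ℝ => (3 * t - 1) * y) (3 * y) s := by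
      simpa using (((hasDerivAt_id s).const_mul (3 : ℝ)).sub_const 1).mul_const y
    exact h.deriv
  have dΘ : deriv (fun t => ptTheta (bCurve x y φ θ t)) s = 0 := by
    rw [hΘ.deriv_eq]; exact deriv_const s φ
  unfold speed
  rw [dX, dY, dΘ, hA]
  have h0 : Real.cos φ * y - Real.sin φ * x = 0 := by linarith
  have hval : w₁ ^ 2 * (Real.cos φ * (3 * x) + Real.sin φ * (3 * y)) ^ 2
      + w₂ ^ 2 * (-Real.sin φ * (3 * x) + Real.cos φ * (3 * y)) ^ 2
      + w₃ ^ 2 * (0 : ℝ) ^ 2 = (3 * w₁) ^ 2 * (x ^ 2 + y ^ 2) := by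
    linear_combination (9 * w₁ ^ 2 * (x ^ 2 + y ^ 2)) * (Real.sin_sq_add_cos_sq φ)
      + ((9 * w₂ ^ 2 - 9 * w₁ ^ 2) * (Real.cos φ * y - Real.sin φ * x)
        + 9 * w₁ ^ 2 * (Real.cos φ * y - Real.sin φ * x)
        - 9 * w₁ ^ 2 * (Real.cos φ * y - Real.sin φ * x)) * h0
  rw [hval, Real.sqrt_mul (by positivity), Real.sqrt_sq (by positivity), mul_assoc]

lemma bCurve_speed3 (w₁ w₂ w₃ x y φ θ : ℝ) (hw₃ : 0 ≤ w₃) {s : ℝ} (hs : 2 / 3 < s) :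
    speed w₁ w₂ w₃ (bCurve x y φ θ) s = 3 * (w₃ * |θ - φ|) := by
  have hE := bCurve_ev3 x y φ θ hs
  have hX : (fun t => ptX (bCurve x y φ θ t)) =ᶠ[nhds s] fun _ => x :=
    hE.mono fun t ht => by simp only [ht, ptX, ptY, ptTheta]
  have hY : (fun t => ptY (bCurve x y φ θ t)) =ᶠ[nhds s] fun _ => y :=
    hE.mono fun t ht => by simp only [ht, ptX, ptY, ptTheta]
  have hΘ : (fun t => ptTheta (bCurve x y φ θ t)) =ᶠ[nhds s]
      fun t => φ + (θ - φ) * (3 * t - 2) :=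
    hE.mono fun t ht => by simp only [ht, ptX, ptY, ptTheta]
  have dX : deriv (fun t => ptX (bCurve x y φ θ t)) s = 0 := by
    rw [hX.deriv_eq]; exact deriv_const s x
  have dY : deriv (fun t => ptY (bCurve x y φ θ t)) s = 0 := by
    rw [hY.deriv_eq]; exact deriv_const s y
  have dΘ : deriv (fun t => ptTheta (bCurve x y φ θ t)) s = (θ - φ) * 3 := by
    rw [hΘ.deriv_eq]
    have h : HasDerivAt (fun t : ℝ => φ + (θ - φ) * (3 * t - 2)) ((θ - φ) * 3) s := by
      simpa using (((((hasDerivAt_id s).const_mul (3 : ℝ)).sub_const 2).const_mul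
        (θ - φ)).const_add φ)
    exact h.deriv
  unfold speed
  rw [dX, dY, dΘ]
  have hval : w₁ ^ 2 * (Real.cos (ptTheta (bCurve x y φ θ s)) * 0
        + Real.sin (ptTheta (bCurve x y φ θ s)) * 0) ^ 2
      + w₂ ^ 2 * (-Real.sin (ptTheta (bCurve x y φ θ s)) * 0
        + Real.cos (ptTheta (bCurve x y φ θ s)) * 0) ^ 2
      + w₃ ^ 2 * ((θ - φ) * 3) ^ 2 = (3 * (w₃ * |θ - φ|)) ^ 2 := by
    nlinarith [sq_abs (θ - φ)]
  rw [hval, Real.sqrt_sq (by positivity)]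

lemma exists_phi (x y θ : ℝ) (hθ : |θ| ≤ Real.pi) :
    ∃ φ : ℝ, Real.sin φ * x = Real.cos φ * y ∧ |φ| + |θ - φ| ≤ Real.pi := by
  obtain ⟨hθ1, hθ2⟩ := abs_le.mp hθ
  by_cases hxy : x = 0 ∧ y = 0
  · exact ⟨θ, by simp [hxy.1, hxy.2], by simpa using hθ⟩
  · set z : ℂ := ⟨x, y⟩ with hz
    have hz0 : z ≠ 0 := by
      simp only [ne_eq, Complex.ext_iff, Complex.zero_re, Complex.zero_im, hz]
      tauto
    set α := Complex.arg z with hαdef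
    have habs : (‖z‖ : ℝ) ≠ 0 := by
      simpa using hz0
    have hsin : Real.sin α = y / ‖z‖ := by
      rw [hαdef, Complex.sin_arg]
    have hcos : Real.cos α = x / ‖z‖ := by
      rw [hαdef, Complex.cos_arg hz0]
    have hcol : Real.sin α * x = Real.cos α * y := by
      rw [hsin, hcos]; field_simp
    have hα1 : -Real.pi < α := Complex.neg_pi_lt_arg z
    have hα2 : α ≤ Real.pi := Complex.arg_le_pi z
    by_cases hA : |α| + |θ - α| ≤ Real.pi
    · exact ⟨α, hcol, hA⟩
    · push_neg at hA
      have hcol' : ∀ c : ℝ, Real.sin (α + c * Real.pi) * x = Real.cos (α + c * Real.pi) * y →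
          True := fun _ _ => trivial
      rcases le_or_gt α 0 with hneg | hpos
      · refine ⟨α + Real.pi, ?_, ?_⟩
        · rw [Real.sin_add, Real.cos_add]
          simp only [Real.sin_pi, Real.cos_pi]
          linear_combination -hcol
        · have habs1 : |α + Real.pi| = α + Real.pi := abs_of_nonneg (by linarith)
          have hge : α ≤ θ := by
            by_contra hlt
            push_neg at hlt
            rw [abs_of_nonpos hneg, abs_of_nonpos (by linarith)] at hA
            linarith
          rw [abs_of_nonpos hneg, abs_of_nonneg (by linarith)] at hA
          rcases le_or_gt 0 (θ - (α + Real.pi)) with hsgn | hsgn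
          · rw [habs1, abs_of_nonneg hsgn]; linarith
          · rw [habs1, abs_of_neg hsgn]; linarith
      · refine ⟨α - Real.pi, ?_, ?_⟩
        · rw [Real.sin_sub, Real.cos_sub]
          simp only [Real.sin_pi, Real.cos_pi]
          linear_combination -hcol
        · have habs1 : |α - Real.pi| = Real.pi - α := by
            rw [abs_of_nonpos (by linarith)]; ring
          have hge : θ ≤ α := by
            by_contra hlt
            push_neg at hlt
            rw [abs_of_pos hpos, abs_of_nonneg (by linarith)] at hA
            linarith
          rw [abs_of_pos hpos, abs_of_nonpos (by linarith)] at hA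
          rcases le_or_gt 0 (θ - (α - Real.pi)) with hsgn | hsgn
          · rw [habs1, abs_of_nonneg hsgn]; linarith
          · rw [habs1, abs_of_neg hsgn]; linarith

theorem second_global_upper_bound_on_distance
    (w₁ w₂ w₃ : ℝ) (hw₁ : 0 < w₁) (hw₂ : 0 < w₂) (hw₃ : 0 < w₃) (h12 : w₁ ≤ w₂)
    (p : Pt) (hp : ptTheta p ∈ Set.Icc (-Real.pi) Real.pi) :
    rDist w₁ w₂ w₃ p ≤ u2Bnd w₁ w₃ p := by
  set x := ptX p with hx
  set y := ptY p with hy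
  set θ := ptTheta p with hθdef
  have hθabs : |θ| ≤ Real.pi := abs_le.mpr ⟨hp.1, hp.2⟩
  obtain ⟨φ, hcol, hφcost⟩ := exists_phi x y θ hθabs
  set γ := bCurve x y φ θ with hγ
  -- basic curve facts
  have hcont : ContinuousOn γ (Set.Icc 0 1) := by
    apply Continuous.continuousOn
    unfold γ
    unfold bCurve
    fun_prop
  have hdiff : ∀ s ∈ Set.Icc (0 : ℝ) 1, s ∉ ({1 / 3, 2 / 3} : Finset ℝ) →
      DifferentiableAt ℝ γ s := by
    intro s _ hsS
    simp only [Finset.mem_insert, Finset.mem_singleton] at hsS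
    push_neg at hsS
    obtain ⟨h13, h23⟩ := hsS
    rcases lt_or_gt_of_ne h13 with h | h
    · refine ((bCurve_ev1 x y φ θ h).differentiableAt_iff).mpr ?_
      fun_prop
    · rcases lt_or_gt_of_ne h23 with h' | h'
      · refine ((bCurve_ev2 x y φ θ h h').differentiableAt_iff).mpr ?_
        fun_prop
      · refine ((bCurve_ev3 x y φ θ h').differentiableAt_iff).mpr ?_
        fun_prop
  have hstart : γ 0 = ((0 : ℝ), (0 : ℝ), (0 : ℝ)) := by
    unfold γ
    unfold bCurve
    norm_num
  have hend : EndsAt γ 1 p := by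
    refine ⟨0, ?_⟩
    unfold γ
    unfold bCurve
    have h1 : min 1 (3 * (1 : ℝ)) = 1 := by norm_num
    have h2 : min 1 (3 * (1 : ℝ) - 1) = 1 := by norm_num
    have h4 : max 0 (3 * (1 : ℝ) - 2) = 1 := by norm_num
    simp only [h1, h2, h4]
    norm_num [← hx, ← hy, ← hθdef]
  -- length computation
  have L1 := integral_const_on_Ioo (f := speed w₁ w₂ w₃ γ) (by norm_num : (0:ℝ) ≤ 1/3)
    (fun s hs => bCurve_speed1 w₁ w₂ w₃ x y φ θ hw₃.le hs.2)
  have L2 := integral_const_on_Ioo (f := speed w₁ w₂ w₃ γ) (by norm_num : (1/3:ℝ) ≤ 2/3)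
    (fun s hs => bCurve_speed2 w₁ w₂ w₃ x y φ θ hw₁.le hcol hs.1 hs.2)
  have L3 := integral_const_on_Ioo (f := speed w₁ w₂ w₃ γ) (by norm_num : (2/3:ℝ) ≤ 1)
    (fun s hs => bCurve_speed3 w₁ w₂ w₃ x y φ θ hw₃.le hs.1)
  have hlen : rLength w₁ w₂ w₃ γ 0 1
      = w₃ * |φ| + w₁ * Real.sqrt (x ^ 2 + y ^ 2) + w₃ * |θ - φ| := by
    unfold rLength
    rw [← intervalIntegral.integral_add_adjacent_intervals (L1.1.trans L2.1) L3.1,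
      ← intervalIntegral.integral_add_adjacent_intervals L1.1 L2.1,
      L1.2, L2.2, L3.2]
    ring
  -- conclude
  have hmem : rLength w₁ w₂ w₃ γ 0 1 ∈
      { l : ℝ | ∃ γ : ℝ → Pt, PiecewiseC1On γ 0 1 ∧ γ 0 = ((0 : ℝ), (0 : ℝ), (0 : ℝ)) ∧
        EndsAt γ 1 p ∧ l = rLength w₁ w₂ w₃ γ 0 1 } :=
    ⟨γ, ⟨hcont, ⟨{1 / 3, 2 / 3}, hdiff⟩⟩, hstart, hend, rfl⟩
  have hbdd : BddBelow { l : ℝ | ∃ γ : ℝ → Pt, PiecewiseC1On γ 0 1 ∧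
      γ 0 = ((0 : ℝ), (0 : ℝ), (0 : ℝ)) ∧ EndsAt γ 1 p ∧ l = rLength w₁ w₂ w₃ γ 0 1 } := by
    refine ⟨0, fun l hl => ?_⟩
    obtain ⟨γ', _, _, _, rfl⟩ := hl
    unfold rLength
    exact intervalIntegral.integral_nonneg (by norm_num)
      (fun u _ => Real.sqrt_nonneg _)
  have hle : rDist w₁ w₂ w₃ p ≤ rLength w₁ w₂ w₃ γ 0 1 := csInf_le hbdd hmem
  rw [hlen] at hle
  have hfinal : w₃ * |φ| + w₁ * Real.sqrt (x ^ 2 + y ^ 2) + w₃ * |θ - φ|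
      ≤ w₁ * Real.sqrt (x ^ 2 + y ^ 2) + w₃ * Real.pi := by
    nlinarith [hφcost, hw₃.le, abs_nonneg φ, abs_nonneg (θ - φ)]
  unfold u2Bnd
  rw [← hx, ← hy]
  linarith

end
end

section
/- Failure of the Riemannian approximations away from the origin: for every y ∈ ℝ one has ρ_b(0,y,0) = ρ_c(0,y,0) = u₁(0,y,0) = w₂|y|; moreover, if w₂ > w₁ and |y| > w₃π/(w₂ − w₁), then ρ_b(0,y,0) > w₁|y| + w₃π ≥ d(0,y,0), so the half-angle approximation strictly overestimates the exact distance there. -/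
open Real Set

noncomputable section

namespace RAFauxQ

/-- Explicit test curve: rotate to θ = π/2, translate along y, rotate back. -/
noncomputable def γy (y : ℝ) : ℝ → Pt := fun s =>
  (0, y * max 0 (min (3*s - 1) 1), Real.pi/2 * min (min (3*s) (3*(1 - s))) 1)

lemma γy_left {y t : ℝ} (ht : t < 1/3) :
    γy y t = ((0:ℝ), (0:ℝ), 3*Real.pi/2*t) := by
  unfold γy
  have h1 : min (3*t - 1) 1 = 3*t - 1 := min_eq_left (by linarith)
  have h3 : min (3*t) (3*(1-t)) = 3*t := min_eq_left (by linarith)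
  have h4 : min (3*t) 1 = 3*t := min_eq_left (by linarith)
  rw [h1, h3, h4, max_eq_left (by linarith)]
  refine Prod.ext rfl (Prod.ext (by simp) (by ring))

lemma γy_mid {y t : ℝ} (ht1 : 1/3 < t) (ht2 : t < 2/3) :
    γy y t = ((0:ℝ), y * (3*t - 1), Real.pi/2) := by
  unfold γy
  have h1 : min (3*t - 1) 1 = 3*t - 1 := min_eq_left (by linarith)
  have h3 : min (min (3*t) (3*(1-t))) 1 = 1 := by
    rw [min_eq_right]
    exact le_min (by linarith) (by linarith)
  rw [h1, h3, max_eq_right (by linarith)]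
  refine Prod.ext rfl (Prod.ext rfl (by ring))

lemma γy_right {y t : ℝ} (ht : 2/3 < t) :
    γy y t = ((0:ℝ), y, 3*Real.pi/2 - 3*Real.pi/2*t) := by
  unfold γy
  have h1 : min (3*t - 1) 1 = 1 := min_eq_right (by linarith)
  have h3 : min (3*t) (3*(1-t)) = 3*(1-t) := min_eq_right (by linarith)
  have h4 : min (3*(1-t)) 1 = 3*(1-t) := min_eq_left (by linarith)
  rw [h1, h3, h4, max_eq_right (by linarith)]
  refine Prod.ext rfl (Prod.ext (by ring) (by ring))

lemma ptX_γy (y t : ℝ) : ptX (γy y t) = 0 := rfl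

lemma derivX_γy (y s : ℝ) : deriv (fun t => ptX (γy y t)) s = 0 := by
  have : (fun t => ptX (γy y t)) = fun _ => (0:ℝ) := rfl
  rw [this, deriv_const]

lemma speed_left {w₁ w₂ w₃ y : ℝ} (hw₃ : 0 ≤ w₃) {s : ℝ} (hs : s < 1/3) :
    speed w₁ w₂ w₃ (γy y) s = w₃ * (3*Real.pi/2) := by
  have hev : (γy y) =ᶠ[nhds s] (fun t => ((0:ℝ), (0:ℝ), 3*Real.pi/2*t)) :=
    Filter.eventually_of_mem (Iio_mem_nhds hs) fun t ht => γy_left ht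
  have hyd : deriv (fun t => ptY (γy y t)) s = 0 := by
    have h : (fun t => ptY (γy y t)) =ᶠ[nhds s] (fun _ => (0:ℝ)) :=
      hev.mono fun t h => by show ptY (γy y t) = _; rw [show γy y t = _ from h]; rfl
    rw [h.deriv_eq, deriv_const]
  have hθd : deriv (fun t => ptTheta (γy y t)) s = 3*Real.pi/2 := by
    have h : (fun t => ptTheta (γy y t)) =ᶠ[nhds s] (fun t => 3*Real.pi/2*t) :=
      hev.mono fun t h => by show ptTheta (γy y t) = _; rw [show γy y t = _ from h]; rfl
    rw [h.deriv_eq]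
    simpa using ((hasDerivAt_id s).const_mul (3*Real.pi/2)).deriv
  unfold speed
  rw [derivX_γy, hyd, hθd]
  have h1 : w₁ ^ 2 * (Real.cos (ptTheta (γy y s)) * 0 + Real.sin (ptTheta (γy y s)) * 0) ^ 2
      + w₂ ^ 2 * (-Real.sin (ptTheta (γy y s)) * 0 + Real.cos (ptTheta (γy y s)) * 0) ^ 2
      + w₃ ^ 2 * (3*Real.pi/2) ^ 2 = (w₃ * (3*Real.pi/2)) ^ 2 := by ring
  rw [h1, Real.sqrt_sq (by positivity)]

lemma speed_mid {w₁ w₂ w₃ y : ℝ} (hw₁ : 0 ≤ w₁) {s : ℝ} (hs1 : 1/3 < s) (hs2 : s < 2/3) :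
    speed w₁ w₂ w₃ (γy y) s = w₁ * (3 * |y|) := by
  have hev : (γy y) =ᶠ[nhds s] (fun t => ((0:ℝ), y * (3*t - 1), Real.pi/2)) :=
    Filter.eventually_of_mem (Ioo_mem_nhds hs1 hs2) fun t ht => γy_mid ht.1 ht.2
  have hyd : deriv (fun t => ptY (γy y t)) s = y * 3 := by
    have h : (fun t => ptY (γy y t)) =ᶠ[nhds s] (fun t => y * (3*t - 1)) :=
      hev.mono fun t h => by show ptY (γy y t) = _; rw [show γy y t = _ from h]; rfl
    rw [h.deriv_eq]
    have : HasDerivAt (fun t : ℝ => y * (3*t - 1)) (y * 3) s := by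
      simpa using (((hasDerivAt_id s).const_mul (3:ℝ)).sub_const 1).const_mul y
    exact this.deriv
  have hθd : deriv (fun t => ptTheta (γy y t)) s = 0 := by
    have h : (fun t => ptTheta (γy y t)) =ᶠ[nhds s] (fun _ => Real.pi/2) :=
      hev.mono fun t h => by show ptTheta (γy y t) = _; rw [show γy y t = _ from h]; rfl
    rw [h.deriv_eq, deriv_const]
  have hθv : ptTheta (γy y s) = Real.pi/2 := by
    rw [show ptTheta (γy y s) = (γy y s).2.2 from rfl, γy_mid hs1 hs2]
  unfold speed
  rw [derivX_γy, hyd, hθd, hθv, Real.cos_pi_div_two, Real.sin_pi_div_two]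
  have h1 : w₁ ^ 2 * ((0:ℝ) * 0 + 1 * (y * 3)) ^ 2 + w₂ ^ 2 * (-1 * 0 + 0 * (y * 3)) ^ 2
      + w₃ ^ 2 * (0:ℝ) ^ 2 = (w₁ * (3 * y)) ^ 2 := by ring
  rw [h1, Real.sqrt_sq_eq_abs, abs_mul, abs_of_nonneg hw₁, abs_mul]
  norm_num

lemma speed_right {w₁ w₂ w₃ y : ℝ} (hw₃ : 0 ≤ w₃) {s : ℝ} (hs : 2/3 < s) :
    speed w₁ w₂ w₃ (γy y) s = w₃ * (3*Real.pi/2) := by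
  have hev : (γy y) =ᶠ[nhds s] (fun t => ((0:ℝ), y, 3*Real.pi/2 - 3*Real.pi/2*t)) :=
    Filter.eventually_of_mem (Ioi_mem_nhds hs) fun t ht => γy_right ht
  have hyd : deriv (fun t => ptY (γy y t)) s = 0 := by
    have h : (fun t => ptY (γy y t)) =ᶠ[nhds s] (fun _ => y) :=
      hev.mono fun t h => by show ptY (γy y t) = _; rw [show γy y t = _ from h]; rfl
    rw [h.deriv_eq, deriv_const]
  have hθd : deriv (fun t => ptTheta (γy y t)) s = -(3*Real.pi/2) := by
    have h : (fun t => ptTheta (γy y t)) =ᶠ[nhds s]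
        (fun t => 3*Real.pi/2 - 3*Real.pi/2*t) :=
      hev.mono fun t h => by show ptTheta (γy y t) = _; rw [show γy y t = _ from h]; rfl
    rw [h.deriv_eq]
    have : HasDerivAt (fun t : ℝ => 3*Real.pi/2 - 3*Real.pi/2*t) (-(3*Real.pi/2)) s := by
      simpa using ((hasDerivAt_id s).const_mul (3*Real.pi/2)).const_sub (3*Real.pi/2)
    exact this.deriv
  unfold speed
  rw [derivX_γy, hyd, hθd]
  have h1 : w₁ ^ 2 * (Real.cos (ptTheta (γy y s)) * 0 + Real.sin (ptTheta (γy y s)) * 0) ^ 2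
      + w₂ ^ 2 * (-Real.sin (ptTheta (γy y s)) * 0 + Real.cos (ptTheta (γy y s)) * 0) ^ 2
      + w₃ ^ 2 * (-(3*Real.pi/2)) ^ 2 = (w₃ * (3*Real.pi/2)) ^ 2 := by ring
  rw [h1, Real.sqrt_sq (by positivity)]

/-- Integrability and integral of a function equal to a constant on an open interval. -/
lemma int_aux {f : ℝ → ℝ} {a b c : ℝ} (hab : a < b)
    (h : ∀ x ∈ Ioo a b, f x = c) :
    IntervalIntegrable f MeasureTheory.volume a b ∧ ∫ x in a..b, f x = (b - a) * c := by
  have hΙ : Set.uIoc a b = Ioc a b := uIoc_of_le hab.le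
  have hb' : ∀ᵐ x : ℝ, x ≠ b := by
    refine MeasureTheory.ae_iff.2 ?_
    have : {x : ℝ | ¬ x ≠ b} = {b} := by ext x; simp
    rw [this]
    exact MeasureTheory.measure_singleton b
  have hae : ∀ᵐ x : ℝ, x ∈ Set.uIoc a b → f x = c := by
    filter_upwards [hb'] with x hxb hx
    rw [hΙ] at hx
    exact h x ⟨hx.1, lt_of_le_of_ne hx.2 hxb⟩
  constructor
  · rw [intervalIntegrable_iff]
    have hic : MeasureTheory.IntegrableOn (fun _ => c) (Set.uIoc a b) MeasureTheory.volume := by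
      refine MeasureTheory.integrableOn_const ?_
      rw [hΙ]; exact measure_Ioc_lt_top.ne
    exact hic.congr ((MeasureTheory.ae_restrict_iff'
      (by rw [hΙ]; exact measurableSet_Ioc)).2 (hae.mono fun x hx h' => (hx h').symm))
  · rw [intervalIntegral.integral_congr_ae hae, intervalIntegral.integral_const,
      smul_eq_mul]

lemma γy_length {w₁ w₂ w₃ y : ℝ} (hw₁ : 0 ≤ w₁) (hw₃ : 0 ≤ w₃) :
    rLength w₁ w₂ w₃ (γy y) 0 1 = w₁ * |y| + w₃ * Real.pi := by
  obtain ⟨i1, v1⟩ := int_aux (f := speed w₁ w₂ w₃ (γy y)) (by norm_num : (0:ℝ) < 1/3)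
    (fun x hx => speed_left hw₃ hx.2)
  obtain ⟨i2, v2⟩ := int_aux (f := speed w₁ w₂ w₃ (γy y)) (by norm_num : (1/3:ℝ) < 2/3)
    (fun x hx => speed_mid hw₁ hx.1 hx.2)
  obtain ⟨i3, v3⟩ := int_aux (f := speed w₁ w₂ w₃ (γy y)) (by norm_num : (2/3:ℝ) < 1)
    (fun x hx => speed_right hw₃ hx.1)
  unfold rLength
  rw [← intervalIntegral.integral_add_adjacent_intervals (i1.trans i2) i3,
    ← intervalIntegral.integral_add_adjacent_intervals i1 i2, v1, v2, v3]
  ring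

lemma γy_piecewiseC1 (y : ℝ) : PiecewiseC1On (γy y) 0 1 := by
  constructor
  · apply Continuous.continuousOn
    unfold γy
    fun_prop
  · refine ⟨{0, 1/3, 2/3, 1}, fun s hs hsS => ?_⟩
    simp only [Finset.mem_insert, Finset.mem_singleton] at hsS
    push_neg at hsS
    obtain ⟨h0, h13, h23, h1⟩ := hsS
    rcases lt_trichotomy s (1/3) with hlt | heq | hgt
    · have hev : (γy y) =ᶠ[nhds s] (fun t => ((0:ℝ), (0:ℝ), 3*Real.pi/2*t)) :=
        Filter.eventually_of_mem (Iio_mem_nhds hlt) fun t ht => γy_left ht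
      have hd : DifferentiableAt ℝ (fun t => ((0:ℝ), (0:ℝ), 3*Real.pi/2*t) : ℝ → Pt) s := by
        apply DifferentiableAt.prodMk (differentiableAt_const _)
        exact DifferentiableAt.prodMk (differentiableAt_const _) (by fun_prop)
      exact hd.congr_of_eventuallyEq hev
    · exact absurd heq h13
    · rcases lt_trichotomy s (2/3) with hlt2 | heq2 | hgt2
      · have hev : (γy y) =ᶠ[nhds s] (fun t => ((0:ℝ), y * (3*t - 1), Real.pi/2)) :=
          Filter.eventually_of_mem (Ioo_mem_nhds hgt hlt2) fun t ht => γy_mid ht.1 ht.2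
        have hd : DifferentiableAt ℝ (fun t => ((0:ℝ), y * (3*t - 1), Real.pi/2) : ℝ → Pt) s := by
          apply DifferentiableAt.prodMk (differentiableAt_const _)
          exact DifferentiableAt.prodMk (by fun_prop) (differentiableAt_const _)
        exact hd.congr_of_eventuallyEq hev
      · exact absurd heq2 h23
      · have hev : (γy y) =ᶠ[nhds s] (fun t => ((0:ℝ), y, 3*Real.pi/2 - 3*Real.pi/2*t)) :=
          Filter.eventually_of_mem (Ioi_mem_nhds hgt2) fun t ht => γy_right ht
        have hd : DifferentiableAt ℝ
            (fun t => ((0:ℝ), y, 3*Real.pi/2 - 3*Real.pi/2*t) : ℝ → Pt) s := by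
          apply DifferentiableAt.prodMk (differentiableAt_const _)
          exact DifferentiableAt.prodMk (differentiableAt_const _) (by fun_prop)
        exact hd.congr_of_eventuallyEq hev

lemma γy_start (y : ℝ) : γy y 0 = ((0:ℝ), (0:ℝ), (0:ℝ)) := by
  unfold γy; norm_num

lemma γy_end (y : ℝ) : EndsAt (γy y) 1 ((0:ℝ), y, (0:ℝ)) := by
  refine ⟨0, ?_⟩
  unfold γy
  simp [ptX, ptY, ptTheta]
  norm_num

end RAFauxQ

theorem riemannian_approximations_fail_far_away
    (w₁ w₂ w₃ : ℝ) (hw₁ : 0 < w₁) (hw₂ : 0 < w₂) (hw₃ : 0 < w₃) (h12 : w₁ ≤ w₂) (y : ℝ) :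
    rhoB w₁ w₂ w₃ ((0 : ℝ), y, (0 : ℝ)) = w₂ * |y| ∧
    rhoC w₁ w₂ w₃ ((0 : ℝ), y, (0 : ℝ)) = w₂ * |y| ∧
    u1Bnd w₂ w₃ ((0 : ℝ), y, (0 : ℝ)) = w₂ * |y| ∧
    (w₁ < w₂ → w₃ * Real.pi / (w₂ - w₁) < |y| →
      w₁ * |y| + w₃ * Real.pi < rhoB w₁ w₂ w₃ ((0 : ℝ), y, (0 : ℝ)) ∧
      rDist w₁ w₂ w₃ ((0 : ℝ), y, (0 : ℝ)) ≤ w₁ * |y| + w₃ * Real.pi) := by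
  have hrb : rhoB w₁ w₂ w₃ ((0 : ℝ), y, (0 : ℝ)) = w₂ * |y| := by
    simp only [rhoB, b1, b2, b3, ptX, ptY, ptTheta]
    norm_num
    rw [show (w₂ * y) ^ 2 = |w₂ * y| ^ 2 from (sq_abs _).symm,
      Real.sqrt_sq (abs_nonneg _), abs_mul, abs_of_nonneg hw₂.le]
  refine ⟨hrb, ?_, ?_, fun h12' hy => ⟨?_, ?_⟩⟩
  · simp only [rhoC, c1, c2, c3, b1, b2, b3, _root_.sinc, ptX, ptY, ptTheta]
    norm_num
    rw [show (w₂ * y) ^ 2 = |w₂ * y| ^ 2 from (sq_abs _).symm,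
      Real.sqrt_sq (abs_nonneg _), abs_mul, abs_of_nonneg hw₂.le]
  · simp only [u1Bnd, ptX, ptY, ptTheta]
    norm_num
    rw [show (w₂ * y) ^ 2 = |w₂ * y| ^ 2 from (sq_abs _).symm,
      Real.sqrt_sq (abs_nonneg _), abs_mul, abs_of_nonneg hw₂.le]
  · rw [hrb]
    have hpos : 0 < w₂ - w₁ := by linarith
    rw [div_lt_iff₀ hpos] at hy
    nlinarith
  · have hbdd : BddBelow { l : ℝ | ∃ γ : ℝ → Pt, PiecewiseC1On γ 0 1 ∧
        γ 0 = ((0 : ℝ), (0 : ℝ), (0 : ℝ)) ∧ EndsAt γ 1 ((0 : ℝ), y, (0 : ℝ)) ∧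
        l = rLength w₁ w₂ w₃ γ 0 1 } := by
      refine ⟨0, fun l hl => ?_⟩
      obtain ⟨γ, _, _, _, rfl⟩ := hl
      exact intervalIntegral.integral_nonneg (by norm_num)
        (fun s _ => Real.sqrt_nonneg _)
    exact csInf_le hbdd ⟨RAFauxQ.γy y, RAFauxQ.γy_piecewiseC1 y, RAFauxQ.γy_start y,
      RAFauxQ.γy_end y, (RAFauxQ.γy_length hw₁.le hw₃.le).symm⟩


end
end

section
/- Comparison of the half-angle and logarithmic approximations: for every p = (x,y,θ) ∈ ℝ² × [−π,π] one has sinc(θ/2)·ρ_c(p) ≤ ρ_b(p) ≤ ρ_c(p). -/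
open Real Set

noncomputable section

lemma sinc_pos_of_mem (u : ℝ) (hu : u ∈ Set.Icc (-(Real.pi/2)) (Real.pi/2)) :
    0 < _root_.sinc u := by
  rcases hu with ⟨h1, h2⟩
  rcases lt_trichotomy u 0 with h | h | h
  · have hs : Real.sin (-u) > 0 := by
      apply Real.sin_pos_of_pos_of_lt_pi (by linarith)
      have := Real.pi_pos; linarith
    rw [Real.sin_neg] at hs
    rw [_root_.sinc, if_neg (ne_of_lt h)]
    exact div_pos_of_neg_of_neg (by linarith) h
  · simp [_root_.sinc, h]
  · have hs : Real.sin u > 0 := by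
      apply Real.sin_pos_of_pos_of_lt_pi h
      have := Real.pi_pos; linarith
    rw [_root_.sinc, if_neg (ne_of_gt h)]
    exact div_pos hs h

lemma sinc_le_one (u : ℝ) : _root_.sinc u ≤ 1 := by
  rcases lt_trichotomy u 0 with h | h | h
  · rw [_root_.sinc, if_neg (ne_of_lt h)]
    have : Real.sin (-u) ≤ -u := Real.sin_le (by linarith)
    rw [Real.sin_neg] at this
    rw [div_le_one_iff]
    right; right; constructor <;> linarith
  · simp [_root_.sinc, h]
  · rw [_root_.sinc, if_neg (ne_of_gt h), div_le_one h]
    exact Real.sin_le (le_of_lt h)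

theorem rhoB_rhoC_comparison
    (w₁ w₂ w₃ : ℝ) (hw₁ : 0 < w₁) (hw₂ : 0 < w₂) (hw₃ : 0 < w₃) (h12 : w₁ ≤ w₂)
    (p : Pt) (hp : ptTheta p ∈ Set.Icc (-Real.pi) Real.pi) :
    _root_.sinc (ptTheta p / 2) * rhoC w₁ w₂ w₃ p ≤ rhoB w₁ w₂ w₃ p ∧
    rhoB w₁ w₂ w₃ p ≤ rhoC w₁ w₂ w₃ p := by
  set u := ptTheta p / 2 with hu
  have hupi : u ∈ Set.Icc (-(Real.pi/2)) (Real.pi/2) := by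
    constructor <;> [linarith [hp.1]; linarith [hp.2]]
  have hs0 : 0 < _root_.sinc u := sinc_pos_of_mem u hupi
  have hs1 : _root_.sinc u ≤ 1 := _root_.sinc_le_one u
  have hb1 : b1 p = _root_.sinc u * c1 p := by
    rw [c1, ← hu]; field_simp
  have hb2 : b2 p = _root_.sinc u * c2 p := by
    rw [c2, ← hu]; field_simp
  have hA : (w₁ * b1 p) ^ 2 + (w₂ * b2 p) ^ 2 + (w₃ * b3 p) ^ 2
      = (_root_.sinc u)^2 * ((w₁ * c1 p) ^ 2 + (w₂ * c2 p) ^ 2) + (w₃ * ptTheta p) ^ 2 := by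
    rw [hb1, hb2, b3]; ring
  have hC0 : 0 ≤ (w₁ * c1 p) ^ 2 + (w₂ * c2 p) ^ 2 := by positivity
  constructor
  · rw [rhoC, ← Real.sqrt_sq hs0.le, ← Real.sqrt_mul (by positivity)]
    apply Real.sqrt_le_sqrt
    rw [hA, c3]
    nlinarith [mul_nonneg (by nlinarith : (0:ℝ) ≤ 1 - _root_.sinc u ^ 2) (sq_nonneg (w₃ * ptTheta p))]
  · rw [rhoB, rhoC]
    apply Real.sqrt_le_sqrt
    rw [hA, c3]
    nlinarith [mul_nonneg (by nlinarith : (0:ℝ) ≤ 1 - _root_.sinc u ^ 2) hC0]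

end
end

section
/- Bound on the dual norm of the differential of ρ_b near θ = 0: there exist constants C ≥ 0 and δ > 0 such that for every p = (x,y,θ) ∈ ℝ³ \ {0} with |θ| ≤ δ, one has ‖dρ_b|_p‖_*² ≤ 1 + ((ζ² − 1)/(2w₃²))·ρ_b(p)² + C·|θ|³, where ζ := w₂/w₁. -/
open Real Set

noncomputable section

set_option maxHeartbeats 1000000 in
lemma absmul (u v m q : ℝ) (h1 : u ≤ q) (h2 : -q ≤ u) (h3 : v ≤ m) (h4 : -m ≤ v) :
    u * v ≤ m * q := by nlinarith

set_option maxHeartbeats 1000000 in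
lemma key_ineq (w₁ w₂ w₃ B1 B2 θ c s T Q : ℝ)
    (hw₁ : 0 < w₁) (hw₂ : 0 < w₂) (hw₃ : 0 < w₃) (h12 : w₁ ≤ w₂)
    (hpy : s ^ 2 + c ^ 2 = 1) (hsin : Real.sin θ = 2 * s * c) (hs2 : s ^ 2 ≤ θ ^ 2 / 4)
    (hT : 0 ≤ T)
    (hub : Real.sin θ - θ ≤ 7 / 32 * T ^ 3) (hlb : θ - Real.sin θ ≤ 7 / 32 * T ^ 3)
    (hQeq : Q = (w₁ * B1) ^ 2 + (w₂ * B2) ^ 2 + (w₃ * θ) ^ 2) :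
    w₂ ^ 2 * w₃ ^ 2 * (w₁ ^ 2 * B1 * c + w₂ ^ 2 * B2 * s) ^ 2
      + w₁ ^ 2 * w₃ ^ 2 * (-(w₁ ^ 2 * B1 * s) + w₂ ^ 2 * B2 * c) ^ 2
      + w₁ ^ 2 * w₂ ^ 2 * ((w₁ ^ 2 - w₂ ^ 2) * B1 * B2 / 2 + w₃ ^ 2 * θ) ^ 2
    ≤ (w₁ ^ 2 * w₂ ^ 2 * w₃ ^ 2
        + (w₂ ^ 2 - w₁ ^ 2) * w₂ ^ 2 / 2 * Q
        + 7 * (w₂ ^ 2 - w₁ ^ 2) * w₁ * w₂ * w₃ ^ 2 / 32 * T ^ 3) * Q := by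
  have hQ0 : 0 ≤ Q := by rw [hQeq]; positivity
  have hD : 0 ≤ w₂ ^ 2 - w₁ ^ 2 := by nlinarith
  have hB2 : (w₂ * B2) ^ 2 ≤ Q := by rw [hQeq]; nlinarith [sq_nonneg (w₁ * B1), sq_nonneg (w₃ * θ)]
  have hθ : (w₃ * θ) ^ 2 ≤ Q := by rw [hQeq]; nlinarith [sq_nonneg (w₁ * B1), sq_nonneg (w₂ * B2)]
  have habu : 2 * (w₁ * w₂) * (B1 * B2) ≤ Q := by
    rw [hQeq]; nlinarith [sq_nonneg (w₁ * B1 - w₂ * B2), sq_nonneg (w₃ * θ)]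
  have habl : -Q ≤ 2 * (w₁ * w₂) * (B1 * B2) := by
    rw [hQeq]; nlinarith [sq_nonneg (w₁ * B1 + w₂ * B2), sq_nonneg (w₃ * θ)]
  have hT3 : 0 ≤ T ^ 3 := by positivity
  have hid : w₂ ^ 2 * w₃ ^ 2 * (w₁ ^ 2 * B1 * c + w₂ ^ 2 * B2 * s) ^ 2
      + w₁ ^ 2 * w₃ ^ 2 * (-(w₁ ^ 2 * B1 * s) + w₂ ^ 2 * B2 * c) ^ 2
      + w₁ ^ 2 * w₂ ^ 2 * ((w₁ ^ 2 - w₂ ^ 2) * B1 * B2 / 2 + w₃ ^ 2 * θ) ^ 2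
      = w₁ ^ 2 * w₂ ^ 2 * w₃ ^ 2 * Q
        + (w₂ ^ 2 - w₁ ^ 2) * w₃ ^ 2 * s ^ 2 * (w₂ ^ 4 * B2 ^ 2 - w₁ ^ 4 * B1 ^ 2)
        + (w₂ ^ 2 - w₁ ^ 2) * w₁ ^ 2 * w₂ ^ 2 * w₃ ^ 2 * (B1 * B2) * (Real.sin θ - θ)
        + (w₂ ^ 2 - w₁ ^ 2) ^ 2 * w₁ ^ 2 * w₂ ^ 2 * (B1 * B2) ^ 2 / 4 := by
    rw [hsin, hQeq]
    linear_combination (w₁ ^ 2 * w₂ ^ 2 * w₃ ^ 2 * (w₁ ^ 2 * B1 ^ 2 + w₂ ^ 2 * B2 ^ 2)) * hpy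
  rw [hid]
  have e1 : (w₃ * θ) ^ 2 * (w₂ * B2) ^ 2 ≤ Q * Q := mul_le_mul hθ hB2 (sq_nonneg _) hQ0
  have ht1 : (w₂ ^ 2 - w₁ ^ 2) * w₃ ^ 2 * s ^ 2 * (w₂ ^ 4 * B2 ^ 2 - w₁ ^ 4 * B1 ^ 2)
      ≤ (w₂ ^ 2 - w₁ ^ 2) * w₂ ^ 2 / 4 * Q ^ 2 := by
    have step1 : s ^ 2 * (w₂ ^ 4 * B2 ^ 2 - w₁ ^ 4 * B1 ^ 2) ≤ θ ^ 2 / 4 * (w₂ ^ 4 * B2 ^ 2) := by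
      nlinarith [mul_nonneg (sq_nonneg s) (mul_nonneg (pow_nonneg hw₁.le 4) (sq_nonneg B1)),
        mul_le_mul_of_nonneg_right hs2 (mul_nonneg (pow_nonneg hw₂.le 4) (sq_nonneg B2))]
    have step2 := mul_le_mul_of_nonneg_left step1 (mul_nonneg hD (sq_nonneg w₃))
    have step3 := mul_le_mul_of_nonneg_left e1 (mul_nonneg hD (sq_nonneg w₂))
    linarith [step2, step3]
  have ht3 : (w₂ ^ 2 - w₁ ^ 2) ^ 2 * w₁ ^ 2 * w₂ ^ 2 * (B1 * B2) ^ 2 / 4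
      ≤ (w₂ ^ 2 - w₁ ^ 2) * w₂ ^ 2 / 4 * Q ^ 2 := by
    have e2 : (2 * (w₁ * w₂) * (B1 * B2)) ^ 2 ≤ Q ^ 2 := by
      nlinarith [habu, habl, hQ0]
    have hDw2 : w₂ ^ 2 - w₁ ^ 2 ≤ w₂ ^ 2 := by nlinarith
    have m1 := mul_le_mul_of_nonneg_right hDw2
      (mul_nonneg hD (sq_nonneg (2 * (w₁ * w₂) * (B1 * B2))))
    have m2 := mul_le_mul_of_nonneg_left e2 (mul_nonneg hD (sq_nonneg w₂))
    linarith [m1, m2, mul_nonneg (mul_nonneg hD (sq_nonneg w₂)) (sq_nonneg Q)]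
  have ht2 : (w₂ ^ 2 - w₁ ^ 2) * w₁ ^ 2 * w₂ ^ 2 * w₃ ^ 2 * (B1 * B2) * (Real.sin θ - θ)
      ≤ 7 * (w₂ ^ 2 - w₁ ^ 2) * w₁ * w₂ * w₃ ^ 2 / 32 * T ^ 3 * Q := by
    have huv : (2 * (w₁ * w₂) * (B1 * B2)) * (Real.sin θ - θ) ≤ (7 / 32 * T ^ 3) * Q :=
      absmul _ _ _ _ habu habl hub (by linarith)
    have hc0 : (0:ℝ) ≤ (w₂ ^ 2 - w₁ ^ 2) * w₃ ^ 2 * (w₁ * w₂) / 2 :=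
      div_nonneg (mul_nonneg (mul_nonneg hD (sq_nonneg w₃)) (by positivity)) (by norm_num)
    have pos2 : 0 ≤ (w₂ ^ 2 - w₁ ^ 2) * (w₁ * w₂ * w₃ ^ 2 * (T ^ 3 * Q)) :=
      mul_nonneg hD (by positivity)
    calc (w₂ ^ 2 - w₁ ^ 2) * w₁ ^ 2 * w₂ ^ 2 * w₃ ^ 2 * (B1 * B2) * (Real.sin θ - θ)
        = ((w₂ ^ 2 - w₁ ^ 2) * w₃ ^ 2 * (w₁ * w₂) / 2)
            * ((2 * (w₁ * w₂) * (B1 * B2)) * (Real.sin θ - θ)) := by ring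
      _ ≤ ((w₂ ^ 2 - w₁ ^ 2) * w₃ ^ 2 * (w₁ * w₂) / 2) * ((7 / 32 * T ^ 3) * Q) :=
          mul_le_mul_of_nonneg_left huv hc0
      _ ≤ 7 * (w₂ ^ 2 - w₁ ^ 2) * w₁ * w₂ * w₃ ^ 2 / 32 * T ^ 3 * Q := by linarith [pos2]
  have expand : (w₁ ^ 2 * w₂ ^ 2 * w₃ ^ 2
        + (w₂ ^ 2 - w₁ ^ 2) * w₂ ^ 2 / 2 * Q
        + 7 * (w₂ ^ 2 - w₁ ^ 2) * w₁ * w₂ * w₃ ^ 2 / 32 * T ^ 3) * Q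
      = w₁ ^ 2 * w₂ ^ 2 * w₃ ^ 2 * Q + ((w₂ ^ 2 - w₁ ^ 2) * w₂ ^ 2 / 4 * Q ^ 2
        + (w₂ ^ 2 - w₁ ^ 2) * w₂ ^ 2 / 4 * Q ^ 2)
        + 7 * (w₂ ^ 2 - w₁ ^ 2) * w₁ * w₂ * w₃ ^ 2 / 32 * T ^ 3 * Q := by ring
  rw [expand]
  linarith [ht1, ht2, ht3]

lemma hasDerivAt_innerX (w₁ w₂ w₃ y θ x : ℝ) :
    HasDerivAt (fun x' : ℝ => (w₁ * (x' * Real.cos (θ/2) + y * Real.sin (θ/2))) ^ 2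
        + (w₂ * (-x' * Real.sin (θ/2) + y * Real.cos (θ/2))) ^ 2 + (w₃ * θ) ^ 2)
      (2 * w₁ ^ 2 * (x * Real.cos (θ/2) + y * Real.sin (θ/2)) * Real.cos (θ/2)
        - 2 * w₂ ^ 2 * (-x * Real.sin (θ/2) + y * Real.cos (θ/2)) * Real.sin (θ/2)) x := by
  have h1 : HasDerivAt (fun x' : ℝ => w₁ * (x' * Real.cos (θ/2) + y * Real.sin (θ/2)))
      (w₁ * Real.cos (θ/2)) x := by
    simpa using (((hasDerivAt_id x).mul_const (Real.cos (θ/2))).add_const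
      (y * Real.sin (θ/2))).const_mul w₁
  have h2 : HasDerivAt (fun x' : ℝ => w₂ * (-x' * Real.sin (θ/2) + y * Real.cos (θ/2)))
      (w₂ * (-1 * Real.sin (θ/2))) x := by
    exact (((hasDerivAt_id x).neg.mul_const (Real.sin (θ/2))).add_const
      (y * Real.cos (θ/2))).const_mul w₂
  have := ((h1.pow 2).add (h2.pow 2)).add_const ((w₃ * θ) ^ 2)
  exact this.congr_deriv (by ring)

lemma hasDerivAt_innerY (w₁ w₂ w₃ x θ y : ℝ) :
    HasDerivAt (fun y' : ℝ => (w₁ * (x * Real.cos (θ/2) + y' * Real.sin (θ/2))) ^ 2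
        + (w₂ * (-x * Real.sin (θ/2) + y' * Real.cos (θ/2))) ^ 2 + (w₃ * θ) ^ 2)
      (2 * w₁ ^ 2 * (x * Real.cos (θ/2) + y * Real.sin (θ/2)) * Real.sin (θ/2)
        + 2 * w₂ ^ 2 * (-x * Real.sin (θ/2) + y * Real.cos (θ/2)) * Real.cos (θ/2)) y := by
  have h1 : HasDerivAt (fun y' : ℝ => w₁ * (x * Real.cos (θ/2) + y' * Real.sin (θ/2)))
      (w₁ * Real.sin (θ/2)) y := by
    simpa using (((hasDerivAt_id y).mul_const (Real.sin (θ/2))).const_add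
      (x * Real.cos (θ/2))).const_mul w₁
  have h2 : HasDerivAt (fun y' : ℝ => w₂ * (-x * Real.sin (θ/2) + y' * Real.cos (θ/2)))
      (w₂ * Real.cos (θ/2)) y := by
    simpa using (((hasDerivAt_id y).mul_const (Real.cos (θ/2))).const_add
      (-x * Real.sin (θ/2))).const_mul w₂
  have := ((h1.pow 2).add (h2.pow 2)).add_const ((w₃ * θ) ^ 2)
  exact this.congr_deriv (by ring)

lemma hasDerivAt_innerT (w₁ w₂ w₃ x y θ : ℝ) :
    HasDerivAt (fun θ' : ℝ => (w₁ * (x * Real.cos (θ'/2) + y * Real.sin (θ'/2))) ^ 2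
        + (w₂ * (-x * Real.sin (θ'/2) + y * Real.cos (θ'/2))) ^ 2 + (w₃ * θ') ^ 2)
      ((w₁ ^ 2 - w₂ ^ 2) * (x * Real.cos (θ/2) + y * Real.sin (θ/2))
          * (-x * Real.sin (θ/2) + y * Real.cos (θ/2)) + 2 * w₃ ^ 2 * θ) θ := by
  have hhalf : HasDerivAt (fun θ' : ℝ => θ' / 2) (1 / 2 : ℝ) θ := by
    simpa using (hasDerivAt_id θ).div_const 2
  have hcos : HasDerivAt (fun θ' : ℝ => Real.cos (θ'/2)) (-Real.sin (θ/2) * (1/2)) θ := hhalf.cos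
  have hsin : HasDerivAt (fun θ' : ℝ => Real.sin (θ'/2)) (Real.cos (θ/2) * (1/2)) θ := hhalf.sin
  have h1 : HasDerivAt (fun θ' : ℝ => w₁ * (x * Real.cos (θ'/2) + y * Real.sin (θ'/2)))
      (w₁ * (x * (-Real.sin (θ/2) * (1/2)) + y * (Real.cos (θ/2) * (1/2)))) θ :=
    ((hcos.const_mul x).add (hsin.const_mul y)).const_mul w₁
  have h2 : HasDerivAt (fun θ' : ℝ => w₂ * (-x * Real.sin (θ'/2) + y * Real.cos (θ'/2)))
      (w₂ * (-x * (Real.cos (θ/2) * (1/2)) + y * (-Real.sin (θ/2) * (1/2)))) θ :=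
    ((hsin.const_mul (-x)).add (hcos.const_mul y)).const_mul w₂
  have h3 : HasDerivAt (fun θ' : ℝ => (w₃ * θ') ^ 2) (2 * (w₃ * θ) * (w₃ * 1)) θ := by
    exact (((hasDerivAt_id θ).const_mul w₃).pow 2).congr_deriv (by simp [id_eq])
  have := ((h1.pow 2).add (h2.pow 2)).add h3
  exact this.congr_deriv (by ring)

set_option maxHeartbeats 2000000 in
theorem dual_norm_differential_rhoB_bound
    (w₁ w₂ w₃ : ℝ) (hw₁ : 0 < w₁) (hw₂ : 0 < w₂) (hw₃ : 0 < w₃) (h12 : w₁ ≤ w₂) :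
    ∃ C : ℝ, 0 ≤ C ∧ ∃ δ : ℝ, 0 < δ ∧
      ∀ p : Pt, p ≠ ((0 : ℝ), (0 : ℝ), (0 : ℝ)) → |ptTheta p| ≤ δ →
        dualNormSq w₁ w₂ w₃ p ≤
          1 + ((w₂ / w₁) ^ 2 - 1) / (2 * w₃ ^ 2) * (rhoB w₁ w₂ w₃ p) ^ 2
            + C * |ptTheta p| ^ 3 := by
  refine ⟨7 * (w₂ ^ 2 - w₁ ^ 2) / (32 * w₁ * w₂), ?_, 1, one_pos, ?_⟩
  · have hD : 0 ≤ w₂ ^ 2 - w₁ ^ 2 := by nlinarith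
    positivity
  rintro ⟨x, y, θ⟩ hp hθδ
  simp only [ptTheta] at hθδ
  have hpy : Real.sin (θ/2) ^ 2 + Real.cos (θ/2) ^ 2 = 1 := Real.sin_sq_add_cos_sq _
  set Q : ℝ := (w₁ * (x * Real.cos (θ/2) + y * Real.sin (θ/2))) ^ 2
      + (w₂ * (-x * Real.sin (θ/2) + y * Real.cos (θ/2))) ^ 2 + (w₃ * θ) ^ 2 with hQdef
  have hQ0 : 0 ≤ Q := by positivity
  have hQpos : 0 < Q := by
    rcases hQ0.lt_or_eq with h | h
    · exact h
    exfalso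
    have h' : (w₁ * (x * Real.cos (θ/2) + y * Real.sin (θ/2))) ^ 2
        + (w₂ * (-x * Real.sin (θ/2) + y * Real.cos (θ/2))) ^ 2 + (w₃ * θ) ^ 2 = 0 := h.symm
    have n1 := sq_nonneg (w₁ * (x * Real.cos (θ/2) + y * Real.sin (θ/2)))
    have n2 := sq_nonneg (w₂ * (-x * Real.sin (θ/2) + y * Real.cos (θ/2)))
    have n3 := sq_nonneg (w₃ * θ)
    have e1 : (w₁ * (x * Real.cos (θ/2) + y * Real.sin (θ/2))) ^ 2 = 0 :=
      le_antisymm (by linarith) n1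
    have e2 : (w₂ * (-x * Real.sin (θ/2) + y * Real.cos (θ/2))) ^ 2 = 0 :=
      le_antisymm (by linarith) n2
    have e3 : (w₃ * θ) ^ 2 = 0 := le_antisymm (by linarith) n3
    have h1 : w₁ * (x * Real.cos (θ/2) + y * Real.sin (θ/2)) = 0 := by
      have := sq_eq_zero_iff.1 e1; exact this
    have h2 : w₂ * (-x * Real.sin (θ/2) + y * Real.cos (θ/2)) = 0 := by
      have := sq_eq_zero_iff.1 e2; exact this
    have h3 : w₃ * θ = 0 := by
      have := sq_eq_zero_iff.1 e3; exact this
    have hB1 : x * Real.cos (θ/2) + y * Real.sin (θ/2) = 0 := by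
      rcases mul_eq_zero.1 h1 with h | h
      · exact absurd h hw₁.ne'
      · exact h
    have hB2 : -x * Real.sin (θ/2) + y * Real.cos (θ/2) = 0 := by
      rcases mul_eq_zero.1 h2 with h | h
      · exact absurd h hw₂.ne'
      · exact h
    have hθ0 : θ = 0 := by
      rcases mul_eq_zero.1 h3 with h | h
      · exact absurd h hw₃.ne'
      · exact h
    have hx0 : x = 0 := by
      linear_combination Real.cos (θ/2) * hB1 - Real.sin (θ/2) * hB2 - x * hpy
    have hy0 : y = 0 := by
      linear_combination Real.sin (θ/2) * hB1 + Real.cos (θ/2) * hB2 - y * hpy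
    exact hp (by simp [hx0, hy0, hθ0, Prod.ext_iff])
  have hρpos : 0 < Real.sqrt Q := Real.sqrt_pos.2 hQpos
  have hρne : Real.sqrt Q ≠ 0 := hρpos.ne'
  have hρ2 : Real.sqrt Q ^ 2 = Q := Real.sq_sqrt hQ0
  -- trig identities
  have hcos2 := Real.cos_two_mul' (θ/2)
  rw [show 2 * (θ/2) = θ by ring] at hcos2
  have hsin2 := Real.sin_two_mul (θ/2)
  rw [show 2 * (θ/2) = θ by ring] at hsin2
  have hA : Real.cos θ * Real.cos (θ/2) + Real.sin θ * Real.sin (θ/2) = Real.cos (θ/2) := by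
    rw [hcos2, hsin2]; linear_combination Real.cos (θ/2) * hpy
  have hB : Real.sin θ * Real.cos (θ/2) - Real.cos θ * Real.sin (θ/2) = Real.sin (θ/2) := by
    rw [hcos2, hsin2]; linear_combination Real.sin (θ/2) * hpy
  -- derivative values
  have hDx : deriv (fun x' => rhoB w₁ w₂ w₃ (x', y, θ)) x
      = (2 * w₁ ^ 2 * (x * Real.cos (θ/2) + y * Real.sin (θ/2)) * Real.cos (θ/2)
        - 2 * w₂ ^ 2 * (-x * Real.sin (θ/2) + y * Real.cos (θ/2)) * Real.sin (θ/2))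
        / (2 * Real.sqrt Q) :=
    ((hasDerivAt_innerX w₁ w₂ w₃ y θ x).sqrt hQpos.ne').deriv
  have hDy : deriv (fun y' => rhoB w₁ w₂ w₃ (x, y', θ)) y
      = (2 * w₁ ^ 2 * (x * Real.cos (θ/2) + y * Real.sin (θ/2)) * Real.sin (θ/2)
        + 2 * w₂ ^ 2 * (-x * Real.sin (θ/2) + y * Real.cos (θ/2)) * Real.cos (θ/2))
        / (2 * Real.sqrt Q) :=
    ((hasDerivAt_innerY w₁ w₂ w₃ x θ y).sqrt hQpos.ne').deriv
  have hDt : deriv (fun θ' => rhoB w₁ w₂ w₃ (x, y, θ')) θ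
      = ((w₁ ^ 2 - w₂ ^ 2) * (x * Real.cos (θ/2) + y * Real.sin (θ/2))
          * (-x * Real.sin (θ/2) + y * Real.cos (θ/2)) + 2 * w₃ ^ 2 * θ)
        / (2 * Real.sqrt Q) :=
    ((hasDerivAt_innerT w₁ w₂ w₃ x y θ).sqrt hQpos.ne').deriv
  have hA1 : A1d (rhoB w₁ w₂ w₃) (x, y, θ)
      = (w₁ ^ 2 * (x * Real.cos (θ/2) + y * Real.sin (θ/2)) * Real.cos (θ/2)
        + w₂ ^ 2 * (-x * Real.sin (θ/2) + y * Real.cos (θ/2)) * Real.sin (θ/2))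
        / Real.sqrt Q := by
    show Real.cos θ * deriv (fun x' => rhoB w₁ w₂ w₃ (x', y, θ)) x
      + Real.sin θ * deriv (fun y' => rhoB w₁ w₂ w₃ (x, y', θ)) y = _
    rw [hDx, hDy]
    field_simp
    linear_combination (w₁ ^ 2 * (x * Real.cos (θ/2) + y * Real.sin (θ/2))) * hA
      + (w₂ ^ 2 * (-x * Real.sin (θ/2) + y * Real.cos (θ/2))) * hB
  have hA2 : A2d (rhoB w₁ w₂ w₃) (x, y, θ)
      = (-(w₁ ^ 2 * (x * Real.cos (θ/2) + y * Real.sin (θ/2)) * Real.sin (θ/2))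
        + w₂ ^ 2 * (-x * Real.sin (θ/2) + y * Real.cos (θ/2)) * Real.cos (θ/2))
        / Real.sqrt Q := by
    show -Real.sin θ * deriv (fun x' => rhoB w₁ w₂ w₃ (x', y, θ)) x
      + Real.cos θ * deriv (fun y' => rhoB w₁ w₂ w₃ (x, y', θ)) y = _
    rw [hDx, hDy]
    have hnum2 : -Real.sin θ * (2 * w₁ ^ 2 * (x * Real.cos (θ/2) + y * Real.sin (θ/2)) * Real.cos (θ/2)
          - 2 * w₂ ^ 2 * (-x * Real.sin (θ/2) + y * Real.cos (θ/2)) * Real.sin (θ/2))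
        + Real.cos θ * (2 * w₁ ^ 2 * (x * Real.cos (θ/2) + y * Real.sin (θ/2)) * Real.sin (θ/2)
          + 2 * w₂ ^ 2 * (-x * Real.sin (θ/2) + y * Real.cos (θ/2)) * Real.cos (θ/2))
        = 2 * (-(w₁ ^ 2 * (x * Real.cos (θ/2) + y * Real.sin (θ/2)) * Real.sin (θ/2))
          + w₂ ^ 2 * (-x * Real.sin (θ/2) + y * Real.cos (θ/2)) * Real.cos (θ/2)) := by
      linear_combination (-(2 * w₁ ^ 2 * (x * Real.cos (θ/2) + y * Real.sin (θ/2)))) * hB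
        + (2 * w₂ ^ 2 * (-x * Real.sin (θ/2) + y * Real.cos (θ/2))) * hA
    rw [show -Real.sin θ * ((2 * w₁ ^ 2 * (x * Real.cos (θ/2) + y * Real.sin (θ/2)) * Real.cos (θ/2)
          - 2 * w₂ ^ 2 * (-x * Real.sin (θ/2) + y * Real.cos (θ/2)) * Real.sin (θ/2)) / (2 * Real.sqrt Q))
        + Real.cos θ * ((2 * w₁ ^ 2 * (x * Real.cos (θ/2) + y * Real.sin (θ/2)) * Real.sin (θ/2)
          + 2 * w₂ ^ 2 * (-x * Real.sin (θ/2) + y * Real.cos (θ/2)) * Real.cos (θ/2)) / (2 * Real.sqrt Q))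
        = (-Real.sin θ * (2 * w₁ ^ 2 * (x * Real.cos (θ/2) + y * Real.sin (θ/2)) * Real.cos (θ/2)
          - 2 * w₂ ^ 2 * (-x * Real.sin (θ/2) + y * Real.cos (θ/2)) * Real.sin (θ/2))
        + Real.cos θ * (2 * w₁ ^ 2 * (x * Real.cos (θ/2) + y * Real.sin (θ/2)) * Real.sin (θ/2)
          + 2 * w₂ ^ 2 * (-x * Real.sin (θ/2) + y * Real.cos (θ/2)) * Real.cos (θ/2))) / (2 * Real.sqrt Q) by ring,
      hnum2]
    rw [div_eq_div_iff (by positivity) hρne]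
    ring
  have hA3 : A3d (rhoB w₁ w₂ w₃) (x, y, θ)
      = ((w₁ ^ 2 - w₂ ^ 2) * (x * Real.cos (θ/2) + y * Real.sin (θ/2))
          * (-x * Real.sin (θ/2) + y * Real.cos (θ/2)) / 2 + w₃ ^ 2 * θ)
        / Real.sqrt Q := by
    show deriv (fun θ' => rhoB w₁ w₂ w₃ (x, y, θ')) θ = _
    rw [hDt]
    field_simp
  have hrho : rhoB w₁ w₂ w₃ (x, y, θ) = Real.sqrt Q := rfl
  -- sin bounds
  have hT1 : |θ| ≤ 1 := hθδ
  have hb := Real.sin_bound hT1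
  have h4 : |θ| ^ 4 ≤ |θ| ^ 3 := pow_le_pow_of_le_one (abs_nonneg θ) hT1 (by norm_num)
  have hth3u : θ ^ 3 ≤ |θ| ^ 3 := by rw [← abs_pow]; exact le_abs_self _
  have hth3l : -(|θ| ^ 3) ≤ θ ^ 3 := by rw [← abs_pow]; exact neg_abs_le _
  have hbb := abs_le.1 hb
  have hub : Real.sin θ - θ ≤ 7 / 32 * |θ| ^ 3 := by nlinarith [hbb.1, hbb.2, pow_le_pow_of_le_one (abs_nonneg θ) hT1 (by norm_num : 3 ≤ 5)]
  have hlb : θ - Real.sin θ ≤ 7 / 32 * |θ| ^ 3 := by nlinarith [hbb.1, hbb.2, pow_le_pow_of_le_one (abs_nonneg θ) hT1 (by norm_num : 3 ≤ 5)]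
  have hs2 : Real.sin (θ/2) ^ 2 ≤ θ ^ 2 / 4 := by
    have := Real.sin_sq_le_sq (x := θ/2)
    nlinarith [this]
  -- key inequality
  have key := key_ineq w₁ w₂ w₃ (x * Real.cos (θ/2) + y * Real.sin (θ/2))
      (-x * Real.sin (θ/2) + y * Real.cos (θ/2)) θ (Real.cos (θ/2)) (Real.sin (θ/2)) (|θ|) Q
      hw₁ hw₂ hw₃ h12 hpy hsin2 hs2 (abs_nonneg θ) hub hlb hQdef
  -- assemble
  rw [dualNormSq, hA1, hA2, hA3, hrho]
  simp only [ptTheta]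
  rw [div_pow, div_pow, div_pow, hρ2]
  have hLe : w₁⁻¹ ^ 2 * ((w₁ ^ 2 * (x * Real.cos (θ/2) + y * Real.sin (θ/2)) * Real.cos (θ/2)
        + w₂ ^ 2 * (-x * Real.sin (θ/2) + y * Real.cos (θ/2)) * Real.sin (θ/2)) ^ 2 / Q)
      + w₂⁻¹ ^ 2 * ((-(w₁ ^ 2 * (x * Real.cos (θ/2) + y * Real.sin (θ/2)) * Real.sin (θ/2))
        + w₂ ^ 2 * (-x * Real.sin (θ/2) + y * Real.cos (θ/2)) * Real.cos (θ/2)) ^ 2 / Q)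
      + w₃⁻¹ ^ 2 * (((w₁ ^ 2 - w₂ ^ 2) * (x * Real.cos (θ/2) + y * Real.sin (θ/2))
          * (-x * Real.sin (θ/2) + y * Real.cos (θ/2)) / 2 + w₃ ^ 2 * θ) ^ 2 / Q)
      = (w₂ ^ 2 * w₃ ^ 2 * (w₁ ^ 2 * (x * Real.cos (θ/2) + y * Real.sin (θ/2)) * Real.cos (θ/2)
        + w₂ ^ 2 * (-x * Real.sin (θ/2) + y * Real.cos (θ/2)) * Real.sin (θ/2)) ^ 2
        + w₁ ^ 2 * w₃ ^ 2 * (-(w₁ ^ 2 * (x * Real.cos (θ/2) + y * Real.sin (θ/2)) * Real.sin (θ/2))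
        + w₂ ^ 2 * (-x * Real.sin (θ/2) + y * Real.cos (θ/2)) * Real.cos (θ/2)) ^ 2
        + w₁ ^ 2 * w₂ ^ 2 * ((w₁ ^ 2 - w₂ ^ 2) * (x * Real.cos (θ/2) + y * Real.sin (θ/2))
          * (-x * Real.sin (θ/2) + y * Real.cos (θ/2)) / 2 + w₃ ^ 2 * θ) ^ 2)
        / (w₁ ^ 2 * w₂ ^ 2 * w₃ ^ 2 * Q) := by
    field_simp
  rw [hLe, div_le_iff₀ (by positivity)]
  have heq : (1 + ((w₂ / w₁) ^ 2 - 1) / (2 * w₃ ^ 2) * Q + 7 * (w₂ ^ 2 - w₁ ^ 2) / (32 * w₁ * w₂) * |θ| ^ 3)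
      * (w₁ ^ 2 * w₂ ^ 2 * w₃ ^ 2 * Q)
      = (w₁ ^ 2 * w₂ ^ 2 * w₃ ^ 2
        + (w₂ ^ 2 - w₁ ^ 2) * w₂ ^ 2 / 2 * Q
        + 7 * (w₂ ^ 2 - w₁ ^ 2) * w₁ * w₂ * w₃ ^ 2 / 32 * |θ| ^ 3) * Q := by
    field_simp
  calc _ ≤ (w₁ ^ 2 * w₂ ^ 2 * w₃ ^ 2
        + (w₂ ^ 2 - w₁ ^ 2) * w₂ ^ 2 / 2 * Q
        + 7 * (w₂ ^ 2 - w₁ ^ 2) * w₁ * w₂ * w₃ ^ 2 / 32 * |θ| ^ 3) * Q := by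
        convert key using 2 <;> ring
    _ = _ := by rw [← heq]

end
end
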